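/- Let n ≥ 2 and δ ≥ 4 ln n. Let a, b ∈ ℝ^n satisfy: a_1 > a_2 > ⋯ > a_n and b_1 > b_2 > ⋯ > b_n; a_i − a_j > δ and b_i − b_j > δ for all 1 ≤ i < j ≤ n; |a_i − b_j| > δ for all i, j ∈ [n] with a_i ≠ b_j; and a_1 > b_1. Then Boltz(a) − Boltz(b) > (ln n)² · e^{−(a_1 − b_1)}. -/

import Mathlib

/-- The softmax of a vector `z ∈ ℝⁿ`: `softmax(z)_i = exp(z_i) / ∑_j exp(z_j)`. -/
noncomputable def softmaxVec {n : ℕ} (z : Fin n → ℝ) : Fin n → ℝ :=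
  fun i => Real.exp (z i) / ∑ j, Real.exp (z j)

/-- The Boltzmann operator `Boltz(z) = ∑_i z_i · softmax(z)_i`. -/
noncomputable def boltz {n : ℕ} (z : Fin n → ℝ) : ℝ :=
  ∑ i, z i * softmaxVec z i


lemma aux_sum_exp_pos {n : ℕ} (hn : 0 < n) (z : Fin n → ℝ) :
    0 < ∑ j, Real.exp (z j) := by
  have : Nonempty (Fin n) := ⟨⟨0, hn⟩⟩
  exact Finset.sum_pos (fun i _ => Real.exp_pos _) Finset.univ_nonempty

lemma aux_softmax_sum {n : ℕ} (hn : 0 < n) (z : Fin n → ℝ) :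
    ∑ i, softmaxVec z i = 1 := by
  have hS := aux_sum_exp_pos hn z
  simp only [softmaxVec, ← Finset.sum_div]
  exact div_self hS.ne'

lemma aux_boltz_le {n : ℕ} (hn : 0 < n) (z : Fin n → ℝ) (i0 : Fin n)
    (hmax : ∀ i, z i ≤ z i0) : boltz z ≤ z i0 := by
  have hS := aux_sum_exp_pos hn z
  have h : boltz z ≤ ∑ i, z i0 * softmaxVec z i := by
    apply Finset.sum_le_sum
    intro i _
    have hp : 0 ≤ softmaxVec z i := div_nonneg (Real.exp_pos _).le hS.le
    exact mul_le_mul_of_nonneg_right (hmax i) hp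
  rwa [← Finset.mul_sum, aux_softmax_sum hn z, mul_one] at h

lemma aux_te_mono {s t : ℝ} (hs : 1 ≤ s) (hst : s ≤ t) :
    t * Real.exp (-t) ≤ s * Real.exp (-s) := by
  have h1 : t ≤ s * Real.exp (t - s) := by
    have h2 := Real.add_one_le_exp (t - s)
    nlinarith
  have h3 : (0:ℝ) < Real.exp (-t) := Real.exp_pos _
  have h4 : s * Real.exp (t - s) * Real.exp (-t) = s * Real.exp (-s) := by
    rw [mul_assoc, ← Real.exp_add]; ring_nf
  nlinarith

lemma aux_boltz_ge {n : ℕ} (hn : 0 < n) (δ : ℝ) (hδ : 1 ≤ δ) (z : Fin n → ℝ)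
    (i0 : Fin n) (hgap : ∀ i, i ≠ i0 → z i0 - z i > δ) :
    z i0 - boltz z ≤ ((n : ℝ) - 1) * (δ * Real.exp (-δ)) := by
  have hS := aux_sum_exp_pos hn z
  have heq : z i0 - boltz z = ∑ i, (z i0 - z i) * softmaxVec z i := by
    have : ∑ i, (z i0 - z i) * softmaxVec z i
        = z i0 * ∑ i, softmaxVec z i - ∑ i, z i * softmaxVec z i := by
      rw [Finset.mul_sum, ← Finset.sum_sub_distrib]
      apply Finset.sum_congr rfl
      intro i _; ring
    rw [this, aux_softmax_sum hn z, mul_one, boltz]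
  rw [heq]
  rw [← Finset.add_sum_erase _ _ (Finset.mem_univ i0), sub_self, zero_mul, zero_add]
  have hbound : ∀ i ∈ Finset.univ.erase i0,
      (z i0 - z i) * softmaxVec z i ≤ δ * Real.exp (-δ) := by
    intro i hi
    have hne := Finset.ne_of_mem_erase hi
    have hg := hgap i hne
    have hp : softmaxVec z i ≤ Real.exp (z i - z i0) := by
      have hle : Real.exp (z i0) ≤ ∑ j, Real.exp (z j) :=
        Finset.single_le_sum (fun j _ => (Real.exp_pos (z j)).le) (Finset.mem_univ i0)
      have := div_le_div_of_nonneg_left (Real.exp_pos (z i)).le (Real.exp_pos (z i0)) hle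
      rwa [← Real.exp_sub] at this
    have hpos : (0:ℝ) < z i0 - z i := by linarith
    calc (z i0 - z i) * softmaxVec z i
        ≤ (z i0 - z i) * Real.exp (-(z i0 - z i)) := by
          rw [show -(z i0 - z i) = z i - z i0 by ring]
          exact mul_le_mul_of_nonneg_left hp hpos.le
      _ ≤ δ * Real.exp (-δ) := aux_te_mono hδ hg.le
  calc ∑ i ∈ Finset.univ.erase i0, (z i0 - z i) * softmaxVec z i
      ≤ ∑ _i ∈ Finset.univ.erase i0, δ * Real.exp (-δ) := Finset.sum_le_sum hbound
    _ = ((Finset.univ.erase i0).card : ℝ) * (δ * Real.exp (-δ)) := by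
        rw [Finset.sum_const, nsmul_eq_mul]
    _ = ((n : ℝ) - 1) * (δ * Real.exp (-δ)) := by
        rw [Finset.card_erase_of_mem (Finset.mem_univ i0), Finset.card_univ, Fintype.card_fin]
        have : (1:ℕ) ≤ n := hn
        push_cast [Nat.cast_sub this]
        ring

/-- for strictly decreasing, `δ`-gapped vectors `a, b` (with
`δ ≥ 4 ln n`, cross-separation `|a_i − b_j| > δ` whenever `a_i ≠ b_j`) and `a₁ > b₁`,
`Boltz(a) − Boltz(b) > (ln n)² e^{−(a₁ − b₁)}`. -/
theorem boltz_sub_boltz_gt_of_all_diff {n : ℕ} (hn : 2 ≤ n) (δ : ℝ)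
    (hδ : 4 * Real.log n ≤ δ) (a b : Fin n → ℝ)
    (hadec : ∀ i j : Fin n, i < j → a i > a j)
    (hbdec : ∀ i j : Fin n, i < j → b i > b j)
    (hagap : ∀ i j : Fin n, i < j → a i - a j > δ)
    (hbgap : ∀ i j : Fin n, i < j → b i - b j > δ)
    (hab : ∀ i j : Fin n, a i ≠ b j → |a i - b j| > δ)
    (h1 : a ⟨0, by omega⟩ > b ⟨0, by omega⟩) :
    boltz a - boltz b >
      Real.log n ^ 2 * Real.exp (-(a ⟨0, by omega⟩ - b ⟨0, by omega⟩)) := by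
  have hn0 : 0 < n := by omega
  set i0 : Fin n := ⟨0, by omega⟩ with hi0
  have hlt : ∀ i : Fin n, i ≠ i0 → i0 < i := by
    intro i h
    have hv : i.val ≠ 0 := fun hv => h (Fin.ext hv)
    exact Fin.lt_def.mpr (by show (0:ℕ) < i.val; exact Nat.pos_of_ne_zero hv)
  -- log facts
  have hL2 : (0.6931471803 : ℝ) < Real.log 2 := Real.log_two_gt_d9
  have hLmono : Real.log 2 ≤ Real.log n :=
    Real.log_le_log (by norm_num) (by exact_mod_cast hn)
  have hLpos : (0:ℝ) < Real.log n := by linarith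
  have hδ1 : (1:ℝ) ≤ δ := by linarith
  have hLn : Real.log n ≤ (n:ℝ) - 1 :=
    Real.log_le_sub_one_of_pos (by positivity)
  -- bounds on boltz
  have hble : boltz b ≤ b i0 :=
    aux_boltz_le hn0 b i0 (fun i => by
      rcases eq_or_ne i i0 with h | h
      · rw [h]
      · exact (hbdec i0 i (hlt i h)).le)
  have hage : a i0 - boltz a ≤ ((n:ℝ) - 1) * (δ * Real.exp (-δ)) :=
    aux_boltz_ge hn0 δ hδ1 a i0 (fun i h => hagap i0 i (hlt i h))
  -- T > δ
  have hT : a i0 - b i0 > δ := by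
    have := hab i0 i0 (ne_of_gt h1)
    rwa [abs_of_pos (by linarith)] at this
  -- n^4 * exp(-δ) ≤ 1
  have hexp4 : Real.exp (4 * Real.log n) = (n:ℝ)^4 := by
    rw [show (4:ℝ) * Real.log n = Real.log ((n:ℝ)^4) by
        rw [Real.log_pow]; push_cast; ring,
      Real.exp_log (by positivity)]
  have hn4 : (n:ℝ)^4 * Real.exp (-δ) ≤ 1 := by
    have h1' : Real.exp (-δ) ≤ Real.exp (-(4 * Real.log n)) :=
      Real.exp_le_exp.mpr (by linarith)
    have h2' : (n:ℝ)^4 * Real.exp (-(4 * Real.log n)) = 1 := by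
      rw [← hexp4, ← Real.exp_add]; simp
    nlinarith [Real.exp_pos (-(4 * Real.log n)), pow_pos (show (0:ℝ) < n by positivity) 4]
  have hEt : Real.exp (-(a i0 - b i0)) < Real.exp (-δ) :=
    Real.exp_lt_exp.mpr (by linarith)
  have hE : (0:ℝ) < Real.exp (-δ) := Real.exp_pos _
  have hEt0 : (0:ℝ) < Real.exp (-(a i0 - b i0)) := Real.exp_pos _
  have hnc : (2:ℝ) ≤ (n:ℝ) := by exact_mod_cast hn
  -- key arithmetic
  have key : Real.log n ^ 2 * Real.exp (-(a i0 - b i0))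
      + ((n:ℝ) - 1) * (δ * Real.exp (-δ)) < a i0 - b i0 := by
    have hL4 : Real.log n ≤ δ / 4 := by linarith
    have s1 : Real.log n ^ 2 * Real.exp (-(a i0 - b i0))
        ≤ ((n:ℝ) - 1) * (δ / 4) * Real.exp (-δ) := by
      have : Real.log n ^ 2 ≤ ((n:ℝ) - 1) * (δ / 4) := by nlinarith
      nlinarith
    have s2 : (5/4 : ℝ) * (((n:ℝ) - 1) * δ) * Real.exp (-δ) < δ := by
      have h2 : (4:ℝ) ≤ (n:ℝ)^2 := by nlinarith
      have h4 : 4*(n:ℝ)^2 ≤ (n:ℝ)^4 := by nlinarith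
      have h8 : 8*(n:ℝ) ≤ 4*(n:ℝ)^2 := by nlinarith
      have hc : (5/4 : ℝ) * ((n:ℝ) - 1) < (n:ℝ)^4 := by linarith
      have hδ0 : (0:ℝ) < δ := by linarith
      have hde : (0:ℝ) < δ * Real.exp (-δ) := mul_pos hδ0 hE
      calc (5/4 : ℝ) * (((n:ℝ) - 1) * δ) * Real.exp (-δ)
          = ((5/4 : ℝ) * ((n:ℝ) - 1)) * (δ * Real.exp (-δ)) := by ring
        _ < (n:ℝ)^4 * (δ * Real.exp (-δ)) := mul_lt_mul_of_pos_right hc hde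
        _ = ((n:ℝ)^4 * Real.exp (-δ)) * δ := by ring
        _ ≤ 1 * δ := mul_le_mul_of_nonneg_right hn4 hδ0.le
        _ = δ := one_mul δ
    linarith [s1, s2, hT]
  linarith [hble, hage, key]
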